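/- arXiv:2605.11657 — 4 statements merged into one kernel-verified Lean document; each statement's English description precedes it below -/
import Mathlib

section
/- Let N be a positive integer, B > 0, K > 0, c₁ = K/(2B²), T = N/B. For 0 ≤ m ≤ N-1, define the stepped frequency on interval n by f_{m,n} = K(n+1/2)/B + m/T − B·⌊(K(n+1/2)/B + m/T)/B⌋, and the accumulated phase φ_m(n/B) = (1/B)·Σ_{i=0}^{n-1} f_{m,i}. Then for every n, φ_m(n/B) − (c₁n² + mn/N) is an integer, and hence exp(j2π φ_m(n/B)) = exp(j2π(c₁n² + mn/N)). -/
open Real Complex Finset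

lemma gauss_half_sum (n : ℕ) : ∑ i ∈ Finset.range n, ((i:ℝ) + 1/2) = (n:ℝ)^2/2 := by
  induction n with
  | zero => simp
  | succ k ih => rw [Finset.sum_range_succ, ih]; push_cast; ring

theorem sfdm_sampling_equivalence
    (N : ℕ) (hN : 0 < N) (B K : ℝ) (hB : 0 < B) (hK : 0 < K)
    (c₁ T : ℝ) (hc₁ : c₁ = K / (2 * B ^ 2)) (hT : T = N / B)
    (f : ℕ → ℕ → ℝ)
    (hf : ∀ m n, f m n =
      K * ((n : ℝ) + 1 / 2) / B + (m : ℝ) / T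
        - B * ⌊(K * ((n : ℝ) + 1 / 2) / B + (m : ℝ) / T) / B⌋)
    (φ : ℕ → ℕ → ℝ)
    (hφ : ∀ m n, φ m n = (1 / B) * ∑ i ∈ Finset.range n, f m i)
    (m : ℕ) (hm : m ≤ N - 1) :
    ∀ n : ℕ,
      (∃ z : ℤ, φ m n - (c₁ * (n : ℝ) ^ 2 + (m : ℝ) * n / N) = z) ∧
      Complex.exp (2 * π * Complex.I * (φ m n)) =
        Complex.exp (2 * π * Complex.I * (c₁ * (n : ℝ) ^ 2 + (m : ℝ) * n / N)) := by
  intro n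
  have hB' : B ≠ 0 := ne_of_gt hB
  have hN' : (N : ℝ) ≠ 0 := Nat.cast_ne_zero.mpr hN.ne'
  set z : ℤ := -(∑ i ∈ Finset.range n, ⌊(K * ((i : ℝ) + 1 / 2) / B + (m : ℝ) / T) / B⌋)
    with hz
  have key : φ m n - (c₁ * (n : ℝ) ^ 2 + (m : ℝ) * n / N) = z := by
    have hsum : ∑ i ∈ Finset.range n, f m i
        = (∑ i ∈ Finset.range n, (K * ((i : ℝ) + 1/2) / B + (m:ℝ)/T))
          - B * ∑ i ∈ Finset.range n,
              ((⌊(K * ((i : ℝ) + 1 / 2) / B + (m : ℝ) / T) / B⌋ : ℤ) : ℝ) := by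
      rw [Finset.mul_sum, ← Finset.sum_sub_distrib]
      exact Finset.sum_congr rfl fun i _ => by rw [hf]
    have hgauss := gauss_half_sum n
    have hsum2 : ∑ i ∈ Finset.range n, (K * ((i : ℝ) + 1/2) / B + (m:ℝ)/T)
        = K * ((n:ℝ)^2/2) / B + (n:ℝ) * ((m:ℝ)/T) := by
      rw [Finset.sum_add_distrib, Finset.sum_const, Finset.card_range]
      have : ∑ i ∈ Finset.range n, K * ((i:ℝ) + 1/2) / B
          = K * (∑ i ∈ Finset.range n, ((i:ℝ) + 1/2)) / B := by
        rw [Finset.mul_sum, Finset.sum_div]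
      rw [this, hgauss]
      push_cast
      ring
    rw [hφ, hsum, hsum2, hz, hc₁, hT]
    push_cast
    field_simp
    ring
  refine ⟨⟨z, key⟩, ?_⟩
  have hφc : (φ m n : ℂ) = ((c₁ * (n : ℝ) ^ 2 + (m : ℝ) * n / N : ℝ) : ℂ) + (z : ℂ) := by
    have : φ m n = (c₁ * (n : ℝ) ^ 2 + (m : ℝ) * n / N) + (z : ℝ) := by linarith [key]
    rw [this]; push_cast; ring
  rw [hφc, mul_add, Complex.exp_add]
  have : Complex.exp (2 * ↑π * Complex.I * (z : ℂ)) = 1 := by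
    rw [show (2 * (π:ℂ) * Complex.I * (z:ℂ)) = (z:ℂ) * (2 * π * Complex.I) by ring]
    exact Complex.exp_int_mul_two_pi_mul_I z
  rw [this, mul_one]
  push_cast
  ring_nf
end

section
/- With the setup of the midpoint construction but using representative time (n+θ)/B with θ ∈ [0,1), the accumulated phase at t_n = n/B equals c₁n² + mn/N + c₁(2θ−1)n minus an integer. Consequently, exp(j2π φ_{m,θ}(t_n)) = exp(j2π(c₁n² + mn/N)) for all n ∈ {0,...,N−1}, all m, and all values of the normalized chirp parameter α = c₁N in an open interval, if and only if θ = 1/2 (assuming N ≥ 2). -/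
open Real Complex Finset

/-- Accumulated SFDM-type phase at `t_n = n/B` when the representative time on each
sampling interval is `(i+θ)/B`, for normalized chirp parameter `α` (so that
`K = 2*α*B^2/N` and `c₁ = α/N`, `T = N/B`). -/
noncomputable def phiTheta (N : ℕ) (B θ α : ℝ) (m n : ℕ) : ℝ :=
  (1 / B) * ∑ i ∈ Finset.range n,
    ((2 * α * B ^ 2 / N) * ((i : ℝ) + θ) / B + (m : ℝ) / ((N : ℝ) / B)
      - B * ⌊((2 * α * B ^ 2 / N) * ((i : ℝ) + θ) / B + (m : ℝ) / ((N : ℝ) / B)) / B⌋)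

lemma sum_id_real (n : ℕ) : ∑ i ∈ Finset.range n, (i : ℝ) = n * (n - 1) / 2 := by
  induction n with
  | zero => simp
  | succ k ih => rw [Finset.sum_range_succ, ih]; push_cast; ring

lemma phi_eq (N : ℕ) (hN : 1 ≤ N) (B : ℝ) (hB : 0 < B) (θ α : ℝ) (m n : ℕ) :
    phiTheta N B θ α m n =
      (α / N) * (n : ℝ) ^ 2 + (m : ℝ) * n / N + (α / N) * (2 * θ - 1) * n
        - (∑ i ∈ Finset.range n, ⌊2 * α * ((i : ℝ) + θ) / N + (m : ℝ) / N⌋ : ℤ) := by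
  have hB' : (B : ℝ) ≠ 0 := ne_of_gt hB
  have hNpos : (0 : ℝ) < N := by exact_mod_cast Nat.lt_of_lt_of_le Nat.zero_lt_one hN
  have hN' : (N : ℝ) ≠ 0 := ne_of_gt hNpos
  have h1 : phiTheta N B θ α m n =
      ∑ i ∈ Finset.range n,
        ((2 * α * ((i : ℝ) + θ) / N + (m : ℝ) / N)
          - ⌊2 * α * ((i : ℝ) + θ) / N + (m : ℝ) / N⌋) := by
    unfold phiTheta
    rw [Finset.mul_sum]
    refine Finset.sum_congr rfl (fun i _ => ?_)
    have harg : (2 * α * B ^ 2 / N) * ((i : ℝ) + θ) / B + (m : ℝ) / ((N : ℝ) / B)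
        = B * (2 * α * ((i : ℝ) + θ) / N + (m : ℝ) / N) := by
      field_simp
    rw [harg, mul_div_cancel_left₀ _ hB']
    field_simp
  rw [h1, Finset.sum_sub_distrib]
  have h2 : ∑ i ∈ Finset.range n, ((2 * α * ((i : ℝ) + θ) / N + (m : ℝ) / N))
      = (α / N) * (n : ℝ) ^ 2 + (m : ℝ) * n / N + (α / N) * (2 * θ - 1) * n := by
    have e1 : ∀ i ∈ Finset.range n, 2 * α * ((i : ℝ) + θ) / N + (m : ℝ) / N
        = (2 * α / N) * (i : ℝ) + ((2 * α * θ / N) + (m : ℝ) / N) := by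
      intro i _; field_simp; ring
    rw [Finset.sum_congr rfl e1, Finset.sum_add_distrib, ← Finset.mul_sum,
      Finset.sum_const, Finset.card_range, nsmul_eq_mul, sum_id_real]
    field_simp
    ring
  rw [h2]
  push_cast
  ring

theorem midpoint_uniqueness
    (N : ℕ) (hN : 2 ≤ N) (B : ℝ) (hB : 0 < B)
    (θ : ℝ) (hθ : θ ∈ Set.Ico (0 : ℝ) 1)
    (a b : ℝ) (ha : 0 < a) (hab : a < b) :
    (∀ α : ℝ, 0 < α → ∀ m n : ℕ, m ≤ N - 1 → n ≤ N - 1 →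
      ∃ z : ℤ, phiTheta N B θ α m n =
        (α / N) * (n : ℝ) ^ 2 + (m : ℝ) * n / N + (α / N) * (2 * θ - 1) * n - z) ∧
    ((∀ α ∈ Set.Ioo a b, ∀ m n : ℕ, m ≤ N - 1 → n ≤ N - 1 →
        Complex.exp (2 * π * Complex.I * phiTheta N B θ α m n) =
          Complex.exp (2 * π * Complex.I *
            ((α / N) * (n : ℝ) ^ 2 + (m : ℝ) * n / N)))
      ↔ θ = 1 / 2) := by
  have hN1 : 1 ≤ N := by omega
  have hNpos : (0 : ℝ) < N := by exact_mod_cast Nat.lt_of_lt_of_le Nat.zero_lt_one hN1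
  have hN' : (N : ℝ) ≠ 0 := ne_of_gt hNpos
  have h2πI : (2 * (π : ℂ) * Complex.I) ≠ 0 := by
    simp [Real.pi_ne_zero, Complex.I_ne_zero]
  constructor
  · intro α _ m n _ _
    exact ⟨_, phi_eq N hN1 B hB θ α m n⟩
  constructor
  · intro H
    by_contra hne
    set c : ℝ := (2 * θ - 1) / N with hc
    have hc0 : c ≠ 0 := by
      have h1 : (2 * θ - 1) ≠ 0 := fun h => hne (by linarith)
      exact div_ne_zero h1 hN'
    have key : ∀ α ∈ Set.Ioo a b, ∃ k : ℤ, α * c = k := by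
      intro α hα
      have hn1 : (1 : ℕ) ≤ N - 1 := by omega
      have hH := H α hα 0 1 (by omega) hn1
      rw [phi_eq N hN1 B hB θ α 0 1] at hH
      rw [Complex.exp_eq_exp_iff_exists_int] at hH
      obtain ⟨k, hk⟩ := hH
      set z : ℤ := ∑ i ∈ Finset.range 1, ⌊2 * α * ((i : ℝ) + θ) / N + (0 : ℕ) / N⌋ with hz
      refine ⟨k + z, ?_⟩
      have hk' : (2 * (π : ℂ) * Complex.I) *
            ((((α / N) * (1 : ℕ) ^ 2 + ((0 : ℕ) : ℝ) * (1 : ℕ) / N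
              + (α / N) * (2 * θ - 1) * (1 : ℕ) - z : ℝ)) : ℂ) =
          (2 * (π : ℂ) * Complex.I) *
            ((((α / N) * (1 : ℕ) ^ 2 + ((0 : ℕ) : ℝ) * (1 : ℕ) / N : ℝ) : ℂ) + k) := by
        rw [hk]; push_cast; ring
      have hR := mul_left_cancel₀ h2πI hk'
      have hR' : (α / N) * (1 : ℝ) ^ 2 + 0 * 1 / N + (α / N) * (2 * θ - 1) * 1 - z
          = (α / N) * 1 ^ 2 + 0 * 1 / N + k := by exact_mod_cast hR
      push_cast
      have : α * c = (α / N) * (2 * θ - 1) := by rw [hc]; field_simp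
      rw [this]; linarith
    set α₁ : ℝ := (a + b) / 2 with hα₁
    set ε : ℝ := min ((b - a) / 4) (1 / (2 * |c|)) with hε
    have hcabs : 0 < |c| := abs_pos.mpr hc0
    have hεpos : 0 < ε := lt_min (by linarith) (by positivity)
    have hε2 : ε ≤ 1 / (2 * |c|) := min_le_right _ _
    have hε1 : ε ≤ (b - a) / 4 := min_le_left _ _
    obtain ⟨k1, h1⟩ := key α₁ ⟨by simp only [hα₁]; linarith, by simp only [hα₁]; linarith⟩
    obtain ⟨k2, h2⟩ := key (α₁ + ε) ⟨by simp only [hα₁]; linarith, by simp only [hα₁]; linarith⟩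
    have hsub : ε * c = ((k2 - k1 : ℤ) : ℝ) := by push_cast; linear_combination h2 - h1
    have habs : |((k2 - k1 : ℤ) : ℝ)| < 1 := by
      rw [← hsub, abs_mul, abs_of_pos hεpos]
      calc ε * |c| ≤ (1 / (2 * |c|)) * |c| := by
            exact mul_le_mul_of_nonneg_right hε2 (le_of_lt hcabs)
        _ = 1 / 2 := by field_simp
        _ < 1 := by norm_num
    have hzero : k2 - k1 = 0 := by
      by_contra h0
      have := Int.one_le_abs h0
      have : (1 : ℝ) ≤ |((k2 - k1 : ℤ) : ℝ)| := by
        rw [← Int.cast_abs]; exact_mod_cast this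
      linarith
    rw [hzero] at hsub
    simp at hsub
    rcases hsub with h | h
    · linarith
    · exact hc0 h
  · intro hθhalf α hα m n hm hn
    subst hθhalf
    rw [phi_eq N hN1 B hB]
    rw [Complex.exp_eq_exp_iff_exists_int]
    exact ⟨-(∑ i ∈ Finset.range n, ⌊2 * α * ((i : ℝ) + (1/2 : ℝ)) / N + (m : ℝ) / N⌋ : ℤ), by
      push_cast; ring⟩
end

section
/- Let α > 0 and N a positive integer. All the jumps e^{−j2π(Nr−m)/(2α)} − 1 vanish for every m ∈ {0,...,N−1} and every integer r with m/N < r < 2α + m/N, if and only if either α ≤ 1/(2N) (in which case no such r exists) or 1/(2α) is a positive integer, i.e., α = 1/(2k) for some positive integer k. -/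
open Real Complex

theorem pc_afdm_continuity_criterion (α : ℝ) (hα : 0 < α) (N : ℕ) (hN : 0 < N) :
    (∀ m : ℕ, m ≤ N - 1 → ∀ r : ℤ,
        (m : ℝ) / N < (r : ℝ) → (r : ℝ) < 2 * α + (m : ℝ) / N →
        Complex.exp (-(2 * π * Complex.I * (((N : ℝ) * r - m) / (2 * α)))) - 1 = 0)
      ↔ (α ≤ 1 / (2 * N) ∨ ∃ k : ℕ, 0 < k ∧ α = 1 / (2 * k)) := by
  have hN' : (0:ℝ) < N := by exact_mod_cast hN
  constructor
  · intro h
    by_cases hle : α ≤ 1 / (2 * N)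
    · exact Or.inl hle
    · right
      push_neg at hle
      have hcast : ((N - 1 : ℕ) : ℝ) = (N : ℝ) - 1 := by
        have : 1 ≤ N := hN
        push_cast [this]
        ring
      have h1 := h (N - 1) le_rfl 1 (by
          rw [hcast, div_lt_iff₀ hN']
          push_cast
          linarith) (by
          rw [hcast]
          push_cast
          have hd : ((N:ℝ) - 1) / N = 1 - 1 / N := by field_simp
          rw [hd]
          have hinv : 1 / (N:ℝ) < 2 * α := by
            rw [div_lt_iff₀ hN']
            have := (div_lt_iff₀ (by positivity : (0:ℝ) < 2 * N)).mp hle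
            nlinarith
          linarith)
      rw [sub_eq_zero, Complex.exp_eq_one_iff] at h1
      obtain ⟨n, hn⟩ := h1
      have hc : ((N - 1 : ℕ) : ℂ) = (N : ℂ) - 1 := by exact_mod_cast hcast
      have h2 : (2:ℂ) * (π:ℂ) * Complex.I ≠ 0 := by
        simp [Real.pi_ne_zero, Complex.I_ne_zero]
      have hαc : (α : ℂ) ≠ 0 := by exact_mod_cast ne_of_gt hα
      have key : (2*(π:ℂ)*Complex.I) * (1/(2*(α:ℂ))) = (2*(π:ℂ)*Complex.I) * (-(n:ℂ)) := by
        have hnum : ((N:ℂ) * ((1:ℤ):ℂ) - ((N - 1 : ℕ) : ℂ)) = 1 := by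
          rw [hc]; push_cast; ring
        field_simp at hn ⊢
        rw [hc] at hn; push_cast at hn ⊢
        linear_combination -hn
      have hcc : (1/(2*(α:ℂ))) = (-(n:ℂ)) := mul_left_cancel₀ h2 key
      have hxr : (1/(2*α) : ℝ) = ((-n : ℤ) : ℝ) := by exact_mod_cast hcc
      have hpos : (0:ℝ) < ((-n : ℤ) : ℝ) := by rw [← hxr]; positivity
      have hnpos : 0 < -n := by exact_mod_cast hpos
      refine ⟨(-n).toNat, by omega, ?_⟩
      have hk : (((-n).toNat : ℝ)) = ((-n : ℤ) : ℝ) := by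
        exact_mod_cast Int.toNat_of_nonneg (le_of_lt hnpos)
      rw [hk, ← hxr]
      field_simp
  · rintro (hle | ⟨k, hk, rfl⟩) m hm r hr1 hr2
    · exfalso
      have h1 : (m:ℝ) < (N:ℝ) * r := by
        have := (div_lt_iff₀ hN').mp hr1
        linarith
      have hA : α * (2 * N) ≤ 1 := (le_div_iff₀ (by positivity)).mp hle
      have hm' : (m:ℝ)/N * N = m := div_mul_cancel₀ _ (ne_of_gt hN')
      have h2 : (N:ℝ) * r < (m:ℝ) + 1 := by
        nlinarith [mul_lt_mul_of_pos_right hr2 hN', hm', hA]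
      have hi1 : (m:ℤ) < (N:ℤ) * r := by exact_mod_cast h1
      have hi2 : (N:ℤ) * r < (m:ℤ) + 1 := by exact_mod_cast h2
      omega
    · have hkc : (k:ℂ) ≠ 0 := by
        exact_mod_cast Nat.cast_ne_zero.mpr hk.ne'
      set n : ℤ := ((N:ℤ) * r - (m:ℤ)) * k with hn
      rw [sub_eq_zero, ← Complex.exp_int_mul_two_pi_mul_I (-n)]
      congr 1
      rw [hn]
      push_cast
      field_simp
end

section
/- For constants c₁, ..., c_M ∈ ℂ and distinct reals τ₁, ..., τ_M, with A(f) = Σ_k c_k e^{−j2πfτ_k}, one has ∫_F^∞ |A(f)|²/(4π²f²) df = (Σ_k |c_k|²)/(4π²F) + O(F⁻²) as F → ∞. -/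
open Real Complex MeasureTheory

set_option maxHeartbeats 1000000
open Set Filter Topology

lemma int_inv_sq {F : ℝ} (hF : 0 < F) :
    IntegrableOn (fun x : ℝ => (x ^ 2)⁻¹) (Set.Ioi F) ∧
      ∫ x in Set.Ioi F, (x ^ 2)⁻¹ = F⁻¹ := by
  have h1 : ∀ x ∈ Set.Ioi F, x ^ (-2 : ℝ) = (x ^ 2)⁻¹ := by
    intro x hx
    rw [show (-2:ℝ) = -(2:ℕ) by norm_num, Real.rpow_neg (le_of_lt (hF.trans hx)),
      Real.rpow_natCast]
  constructor
  · exact ((integrableOn_Ioi_rpow_of_lt (by norm_num) hF).congr_fun h1 measurableSet_Ioi)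
  · rw [← setIntegral_congr_fun measurableSet_Ioi h1,
      integral_Ioi_rpow_of_lt (by norm_num) hF]
    norm_num [Real.rpow_neg_one]

lemma int_inv_cube {F : ℝ} (hF : 0 < F) :
    IntegrableOn (fun x : ℝ => (x ^ 3)⁻¹) (Set.Ioi F) ∧
      ∫ x in Set.Ioi F, (x ^ 3)⁻¹ = (F ^ 2)⁻¹ / 2 := by
  have h1 : ∀ x ∈ Set.Ioi F, x ^ (-3 : ℝ) = (x ^ 3)⁻¹ := by
    intro x hx
    rw [show (-3:ℝ) = -(3:ℕ) by norm_num, Real.rpow_neg (le_of_lt (hF.trans hx)),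
      Real.rpow_natCast]
  constructor
  · exact ((integrableOn_Ioi_rpow_of_lt (by norm_num) hF).congr_fun h1 measurableSet_Ioi)
  · rw [← setIntegral_congr_fun measurableSet_Ioi h1,
      integral_Ioi_rpow_of_lt (by norm_num) hF]
    norm_num


lemma intOn_exp_div_sq (α : ℝ) {F : ℝ} (hF : 0 < F) :
    IntegrableOn (fun x : ℝ => Complex.exp (↑(α * x) * Complex.I) / (x:ℂ) ^ 2)
      (Set.Ioi F) := by
  apply Integrable.mono' (int_inv_sq hF).1
  · refine ContinuousOn.aestronglyMeasurable (fun x hx => ?_) measurableSet_Ioi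
    have hx0 : (x:ℂ) ≠ 0 := by
      exact_mod_cast (hF.trans hx).ne'
    have c1 : Continuous fun x : ℝ => (↑(α * x) : ℂ) * Complex.I :=
      (Complex.continuous_ofReal.comp (continuous_const.mul continuous_id)).mul
        continuous_const
    have c2 : Continuous fun x : ℝ => ((x:ℂ)) ^ 2 := Complex.continuous_ofReal.pow 2
    exact ((Complex.continuous_exp.comp c1).continuousAt.div c2.continuousAt
      (pow_ne_zero 2 hx0)).continuousWithinAt
  · refine (ae_restrict_iff' measurableSet_Ioi).2 (Filter.Eventually.of_forall fun x hx => ?_)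
    have hxpos := hF.trans hx
    rw [norm_div, Complex.norm_exp_ofReal_mul_I]
    simp [abs_of_pos hxpos]

lemma intOn_exp_div_cube (α : ℝ) {F : ℝ} (hF : 0 < F) :
    IntegrableOn (fun x : ℝ => Complex.exp (↑(α * x) * Complex.I) / (x:ℂ) ^ 3)
      (Set.Ioi F) := by
  apply Integrable.mono' (int_inv_cube hF).1
  · refine ContinuousOn.aestronglyMeasurable (fun x hx => ?_) measurableSet_Ioi
    have hx0 : (x:ℂ) ≠ 0 := by
      exact_mod_cast (hF.trans hx).ne'
    have c1 : Continuous fun x : ℝ => (↑(α * x) : ℂ) * Complex.I :=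
      (Complex.continuous_ofReal.comp (continuous_const.mul continuous_id)).mul
        continuous_const
    have c2 : Continuous fun x : ℝ => ((x:ℂ)) ^ 3 := Complex.continuous_ofReal.pow 3
    exact ((Complex.continuous_exp.comp c1).continuousAt.div c2.continuousAt
      (pow_ne_zero 3 hx0)).continuousWithinAt
  · refine (ae_restrict_iff' measurableSet_Ioi).2 (Filter.Eventually.of_forall fun x hx => ?_)
    have hxpos := hF.trans hx
    rw [norm_div, Complex.norm_exp_ofReal_mul_I]
    simp [abs_of_pos hxpos]

lemma osc_bound (α : ℝ) (hα : α ≠ 0) {F : ℝ} (hF : 0 < F) :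
    ‖∫ x in Set.Ioi F, Complex.exp (↑(α * x) * Complex.I) / (x:ℂ) ^ 2‖
      ≤ 2 / (|α| * F ^ 2) := by
  set c : ℂ := (α : ℂ) * Complex.I with hc_def
  have hαC : (α : ℂ) ≠ 0 := Complex.ofReal_ne_zero.2 hα
  have hc : c ≠ 0 := mul_ne_zero hαC Complex.I_ne_zero
  set E : ℝ → ℂ := fun x => Complex.exp (↑(α * x) * Complex.I) with hE_def
  set φ : ℝ → ℂ := fun x => E x / (c * ((x:ℂ) * (x:ℂ))) with hφ_def
  set D : ℝ → ℂ := fun x => E x / (x:ℂ) ^ 2 - (2 / c) * (E x / (x:ℂ) ^ 3) with hD_def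
  have h0 : ∀ x : ℝ, HasDerivAt (fun y : ℝ => ((y:ℝ):ℂ)) 1 x := by
    intro x
    simpa using (hasDerivAt_id x).ofReal_comp
  have hE : ∀ x : ℝ, HasDerivAt E (c * E x) x := by
    intro x
    have h1 : HasDerivAt (fun y : ℝ => (↑(α * y) : ℂ) * Complex.I) c x := by
      have h := (((h0 x).const_mul (α : ℂ)).mul_const Complex.I)
      have hfun : (fun y : ℝ => (↑(α * y) : ℂ) * Complex.I)
          = fun y : ℝ => ((α:ℂ) * (y:ℂ)) * Complex.I := by
        funext y; push_cast; ring
      rw [hfun]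
      exact h.congr_deriv (by rw [hc_def]; ring)
    have h2 := h1.cexp
    rw [hE_def]
    convert h2 using 1
    ring
  have hderiv : ∀ x ∈ Set.Ici F, HasDerivAt φ (D x) x := by
    intro x hx
    have hxpos : 0 < x := lt_of_lt_of_le hF hx
    have hx0 : (x:ℂ) ≠ 0 := Complex.ofReal_ne_zero.2 hxpos.ne'
    have hv : HasDerivAt (fun y : ℝ => c * (((y:ℝ):ℂ) * ((y:ℝ):ℂ)))
        (c * (1 * (x:ℂ) + (x:ℂ) * 1)) x := ((h0 x).mul (h0 x)).const_mul c
    have hne : c * ((x:ℂ) * (x:ℂ)) ≠ 0 := mul_ne_zero hc (mul_ne_zero hx0 hx0)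
    have hdd := (hE x).div hv hne
    refine hdd.congr_deriv ?_
    simp only [hD_def]
    field_simp
    ring
  have hDint : IntegrableOn D (Set.Ioi F) :=
    (intOn_exp_div_sq α hF).sub ((intOn_exp_div_cube α hF).const_mul (2 / c))
  have htend : Tendsto φ atTop (𝓝 0) := by
    apply squeeze_zero_norm' (a := fun x : ℝ => |α|⁻¹ * (x ^ 2)⁻¹)
    · filter_upwards [eventually_gt_atTop (0:ℝ)] with x hx
      have hEx : ‖E x‖ = 1 := by
        simp only [hE_def]; exact Complex.norm_exp_ofReal_mul_I _
      have : ‖φ x‖ = |α|⁻¹ * (x ^ 2)⁻¹ := by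
        simp only [hφ_def, norm_div, norm_mul, hEx, hc_def,
          Complex.norm_I, Complex.norm_real, Real.norm_eq_abs, abs_of_pos hx, mul_one]
        rw [one_div, pow_two, mul_inv]
      exact this.le
    · have h2 : Tendsto (fun x : ℝ => (x ^ 2)⁻¹) atTop (𝓝 0) :=
        (tendsto_pow_atTop (by norm_num : (2:ℕ) ≠ 0)).inv_tendsto_atTop
      simpa using h2.const_mul |α|⁻¹
  have key : ∫ x in Set.Ioi F, D x = 0 - φ F :=
    integral_Ioi_of_hasDerivAt_of_tendsto' hderiv hDint htend
  have hsplit : ∫ x in Set.Ioi F, D x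
      = (∫ x in Set.Ioi F, E x / (x:ℂ) ^ 2)
        - (2 / c) * ∫ x in Set.Ioi F, E x / (x:ℂ) ^ 3 := by
    rw [hD_def]
    rw [integral_sub (intOn_exp_div_sq α hF)
      ((intOn_exp_div_cube α hF).const_mul (2 / c)), integral_const_mul]
  have hIexp : ∫ x in Set.Ioi F, Complex.exp (↑(α * x) * Complex.I) / (x:ℂ) ^ 2
      = -φ F + (2 / c) * ∫ x in Set.Ioi F, E x / (x:ℂ) ^ 3 := by
    have := key
    rw [hsplit] at this
    have : (∫ x in Set.Ioi F, E x / (x:ℂ) ^ 2)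
        = -φ F + (2 / c) * ∫ x in Set.Ioi F, E x / (x:ℂ) ^ 3 := by
      linear_combination this
    exact this
  rw [hIexp]
  have hnormc : ‖c‖ = |α| := by
    rw [hc_def]; simp [Complex.norm_real]
  have hF2 : (0:ℝ) < F ^ 2 := pow_pos hF 2
  have hαpos : (0:ℝ) < |α| := abs_pos.2 hα
  have hφF : ‖φ F‖ = (|α| * F ^ 2)⁻¹ := by
    rw [hφ_def]
    simp only [norm_div, norm_mul,
      hnormc, Complex.norm_real, Real.norm_eq_abs,
      abs_of_pos hF]
    have hEF : ‖E F‖ = 1 := by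
      simp only [hE_def]; exact Complex.norm_exp_ofReal_mul_I _
    rw [hEF, one_div, pow_two]
  have hI3 : ‖∫ x in Set.Ioi F, E x / (x:ℂ) ^ 3‖ ≤ (F ^ 2)⁻¹ / 2 := by
    refine le_trans (norm_integral_le_integral_norm _) ?_
    have heq : ∀ x ∈ Set.Ioi F, ‖E x / (x:ℂ) ^ 3‖ = (x ^ 3)⁻¹ := by
      intro x hx
      have hxpos := hF.trans hx
      rw [hE_def]
      simp only [norm_div, Complex.norm_exp_ofReal_mul_I, norm_pow,
        Complex.norm_real, Real.norm_eq_abs, abs_of_pos hxpos]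
      simp
    rw [setIntegral_congr_fun measurableSet_Ioi heq, (int_inv_cube hF).2]
  calc ‖-φ F + (2 / c) * ∫ x in Set.Ioi F, E x / (x:ℂ) ^ 3‖
      ≤ ‖φ F‖ + ‖2 / c‖ * ‖∫ x in Set.Ioi F, E x / (x:ℂ) ^ 3‖ := by
        refine le_trans (norm_add_le _ _) ?_
        rw [norm_neg, norm_mul]
    _ ≤ (|α| * F ^ 2)⁻¹ + (2 / |α|) * ((F ^ 2)⁻¹ / 2) := by
        rw [hφF]
        gcongr
        · rw [norm_div, hnormc]; simp
    _ = 2 / (|α| * F ^ 2) := by field_simp; ring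

theorem trig_sum_tail_coefficient
    (M : ℕ) (c : Fin M → ℂ) (τ : Fin M → ℝ) (hτ : Function.Injective τ) :
    ∃ C : ℝ, ∀ F : ℝ, 1 ≤ F →
      |(∫ f in Set.Ioi F,
          (‖∑ k, c k * Complex.exp (-(2 * π * Complex.I * f * τ k))‖) ^ 2
            / (4 * π ^ 2 * f ^ 2))
        - (∑ k, (‖c k‖) ^ 2) / (4 * π ^ 2 * F)| ≤ C / F ^ 2 := by
  classical
  set α : Fin M → Fin M → ℝ := fun k l => 2 * π * (τ l - τ k) with hα_def
  have hαne : ∀ k l, k ≠ l → α k l ≠ 0 := by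
    intro k l hkl
    have hne : τ l ≠ τ k := fun h => hkl (hτ h).symm
    have hπ : (π:ℝ) ≠ 0 := Real.pi_ne_zero
    simp only [hα_def]
    intro h
    rcases mul_eq_zero.1 h with h1 | h2
    · rcases mul_eq_zero.1 h1 with h3 | h4
      · norm_num at h3
      · exact hπ h4
    · exact hne (by linarith [sub_eq_zero.1 h2])
  set A : ℝ → ℂ := fun f => ∑ k, c k * Complex.exp (-(2 * π * Complex.I * f * τ k))
    with hA_def
  set G : ℝ → ℂ := fun f => (A f * (starRingEnd ℂ) (A f)) / ((4 * π ^ 2 * f ^ 2 : ℝ) : ℂ)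
    with hG_def
  set T : Fin M → Fin M → ℝ → ℂ := fun k l f =>
    (c k * (starRingEnd ℂ) (c l) / (4 * (π:ℂ) ^ 2)) *
      (Complex.exp (↑(α k l * f) * Complex.I) / (f:ℂ) ^ 2) with hT_def
  use ∑ k, ∑ l ∈ Finset.univ.erase k,
    (‖c k‖ * ‖c l‖ / (4 * π ^ 2)) * (2 / |α k l|)
  intro F hF
  have hF0 : (0:ℝ) < F := lt_of_lt_of_le one_pos hF
  have hπ2 : (0:ℝ) < 4 * π ^ 2 := by positivity
  -- Step 1: integrand = (G f).re
  have hre : ∀ f : ℝ, (‖A f‖) ^ 2 / (4 * π ^ 2 * f ^ 2) = (G f).re := by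
    intro f
    rw [hG_def]
    simp only [Complex.div_ofReal_re]
    rw [Complex.mul_conj]
    simp [Complex.sq_norm]
  -- Step 2: pointwise expansion of G on Ioi F
  have hGT : ∀ f ∈ Set.Ioi F, G f = ∑ k, ∑ l, T k l f := by
    intro f hf
    have hfpos : (0:ℝ) < f := hF0.trans hf
    have hfC : (f:ℂ) ≠ 0 := Complex.ofReal_ne_zero.2 hfpos.ne'
    have hπC : ((π:ℝ):ℂ) ≠ 0 := Complex.ofReal_ne_zero.2 Real.pi_ne_zero
    have hprod : A f * (starRingEnd ℂ) (A f)
        = ∑ k, ∑ l, (c k * (starRingEnd ℂ) (c l)) *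
            Complex.exp (↑(α k l * f) * Complex.I) := by
      rw [hA_def, map_sum, Finset.sum_mul_sum]
      refine Finset.sum_congr rfl fun k _ => Finset.sum_congr rfl fun l _ => ?_
      rw [map_mul, ← Complex.exp_conj]
      have hconj : (starRingEnd ℂ) (-(2 * ↑π * Complex.I * ↑f * ↑(τ l)))
          = 2 * ↑π * Complex.I * ↑f * ↑(τ l) := by
        simp only [map_neg, map_mul, Complex.conj_I, Complex.conj_ofReal, map_ofNat]
        ring
      rw [hconj, mul_mul_mul_comm, ← Complex.exp_add]
      have hexp : -(2 * ↑π * Complex.I * ↑f * ↑(τ k)) + 2 * ↑π * Complex.I * ↑f * ↑(τ l)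
          = (↑(α k l * f) : ℂ) * Complex.I := by
        simp only [hα_def]
        push_cast
        ring
      rw [hexp]
    simp only [hG_def]
    rw [hprod, Finset.sum_div]
    refine Finset.sum_congr rfl fun k _ => ?_
    rw [Finset.sum_div]
    refine Finset.sum_congr rfl fun l _ => ?_
    rw [hT_def]
    have hden : ((4 * π ^ 2 * f ^ 2 : ℝ) : ℂ) = (4 * (π:ℂ)^2) * (f:ℂ)^2 := by
      push_cast; ring
    rw [hden]
    field_simp
  -- Step 3: integrability
  have hTint : ∀ k l, IntegrableOn (T k l) (Set.Ioi F) := by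
    intro k l
    exact (intOn_exp_div_sq (α k l) hF0).const_mul _
  have hGint : IntegrableOn G (Set.Ioi F) := by
    refine (IntegrableOn.congr_fun ?_ (fun f hf => (hGT f hf).symm) measurableSet_Ioi)
    exact integrable_finset_sum _ fun k _ => integrable_finset_sum _ fun l _ => hTint k l
  -- Step 4: compute ∫ G as double sum
  have hIG : ∫ f in Set.Ioi F, G f = ∑ k, ∑ l, ∫ f in Set.Ioi F, T k l f := by
    rw [setIntegral_congr_fun measurableSet_Ioi hGT,
      integral_finset_sum _ fun k _ => integrable_finset_sum _ fun l _ => hTint k l]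
    exact Finset.sum_congr rfl fun k _ => integral_finset_sum _ fun l _ => hTint k l
  -- diagonal value
  have hdiag : ∀ k : Fin M, ∫ f in Set.Ioi F, T k k f
      = (((‖c k‖) ^ 2 / (4 * π ^ 2 * F) : ℝ) : ℂ) := by
    intro k
    have hα0 : α k k = 0 := by simp [hα_def]
    have heq : ∀ f ∈ Set.Ioi F, T k k f
        = (c k * (starRingEnd ℂ) (c k) / (4 * (π:ℂ) ^ 2)) * ↑((f ^ 2)⁻¹ : ℝ) := by
      intro f hf
      have hfpos := hF0.trans hf
      have hfC : (f:ℂ) ≠ 0 := Complex.ofReal_ne_zero.2 hfpos.ne'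
      rw [hT_def]
      simp only [hα0, zero_mul, Complex.ofReal_zero, Complex.exp_zero]
      push_cast
      field_simp
    have hofReal : (∫ f in Set.Ioi F, (((f ^ 2)⁻¹ : ℝ) : ℂ))
        = (((F⁻¹ : ℝ)) : ℂ) := by
      have h := ContinuousLinearMap.integral_comp_comm Complex.ofRealCLM (int_inv_sq hF0).1
      simp only [Complex.ofRealCLM_apply] at h
      rw [h, (int_inv_sq hF0).2]
    rw [setIntegral_congr_fun measurableSet_Ioi heq, integral_const_mul, hofReal,
      Complex.mul_conj]
    push_cast [Complex.sq_norm]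
    field_simp
  -- split off diagonal
  have hsplitsum : ∫ f in Set.Ioi F, G f
      = ((((∑ k, (‖c k‖) ^ 2) / (4 * π ^ 2 * F) : ℝ)) : ℂ)
        + ∑ k, ∑ l ∈ Finset.univ.erase k, ∫ f in Set.Ioi F, T k l f := by
    rw [hIG]
    have : ∀ k : Fin M, (∑ l, ∫ f in Set.Ioi F, T k l f)
        = (∑ l ∈ Finset.univ.erase k, ∫ f in Set.Ioi F, T k l f)
          + (((‖c k‖) ^ 2 / (4 * π ^ 2 * F) : ℝ) : ℂ) := by
      intro k
      rw [← hdiag k, Finset.sum_erase_add _ _ (Finset.mem_univ k)]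
    rw [Finset.sum_congr rfl fun k _ => this k, Finset.sum_add_distrib]
    rw [← Complex.ofReal_sum, add_comm]
    congr 1
    · push_cast
      rw [Finset.sum_div]
  -- rewrite the LHS integral
  have hLHS : (∫ f in Set.Ioi F,
        (‖∑ k, c k * Complex.exp (-(2 * π * Complex.I * f * τ k))‖) ^ 2
          / (4 * π ^ 2 * f ^ 2))
      = (∫ f in Set.Ioi F, G f).re := by
    rw [show (fun f : ℝ => (‖∑ k, c k *
          Complex.exp (-(2 * π * Complex.I * f * τ k))‖) ^ 2 / (4 * π ^ 2 * f ^ 2))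
        = fun f : ℝ => (G f).re from funext fun f => hre f]
    have h := Complex.reCLM.integral_comp_comm hGint
    simp only [Complex.reCLM_apply] at h
    exact h
  rw [hLHS, hsplitsum]
  rw [Complex.add_re, Complex.ofReal_re]
  rw [add_sub_cancel_left]
  -- bound the off-diagonal remainder
  have hbound : |(∑ k, ∑ l ∈ Finset.univ.erase k, ∫ f in Set.Ioi F, T k l f).re|
      ≤ ∑ k, ∑ l ∈ Finset.univ.erase k,
          (‖c k‖ * ‖c l‖ / (4 * π ^ 2)) * (2 / (|α k l| * F ^ 2)) := by
    refine le_trans (Complex.abs_re_le_norm _) ?_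
    refine le_trans (norm_sum_le _ _) ?_
    refine Finset.sum_le_sum fun k _ => ?_
    refine le_trans (norm_sum_le _ _) ?_
    refine Finset.sum_le_sum fun l hl => ?_
    have hkl : k ≠ l := fun h => (Finset.ne_of_mem_erase hl) h.symm
    have hosc := osc_bound (α k l) (hαne k l hkl) hF0
    rw [hT_def, integral_const_mul, norm_mul]
    have hconst : ‖c k * (starRingEnd ℂ) (c l) / (4 * (π:ℂ) ^ 2)‖
        = ‖c k‖ * ‖c l‖ / (4 * π ^ 2) := by
      rw [norm_div, norm_mul]
      simp [
        abs_of_pos Real.pi_pos]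
    rw [hconst]
    refine mul_le_mul_of_nonneg_left hosc ?_
    positivity
  refine le_trans hbound ?_
  rw [div_eq_mul_inv, Finset.sum_mul]
  refine Finset.sum_le_sum fun k _ => ?_
  rw [Finset.sum_mul]
  refine Finset.sum_le_sum fun l hl => ?_
  have hkl : k ≠ l := fun h => (Finset.ne_of_mem_erase hl) h.symm
  have hαpos : 0 < |α k l| := abs_pos.2 (hαne k l hkl)
  have hF2 : (0:ℝ) < F ^ 2 := pow_pos hF0 2
  rw [mul_assoc]
  refine mul_le_mul_of_nonneg_left ?_ (by positivity)
  exact le_of_eq (by rw [division_def, division_def, mul_inv, mul_assoc])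
end
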